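/- Define $T(n,k)$ by $T(1,1)=1$, $T(n,0)=0$, $T(n,k)=0$ for $k > n$, and $T(n+1,k) = k\,T(n,k) + T(n,k-1)$ (so $T(n,k)$ are Stirling numbers of the second kind). Then for all $n \ge 1$ and $1 \le k \le n$, $k\, T(n,k)^2 \ge (k+1)\, T(n,k+1)\, T(n,k-1)$. -/
import Mathlib


/-- Stirling numbers of the second kind, via the recursion
`T(n+1,k) = k T(n,k) + T(n,k-1)` with `T(1,1) = 1`, `T(n,0) = 0` for `n ≥ 1`
and `T(n,k) = 0` for `k > n`. -/
def stirlingSecond : ℕ → ℕ → ℕ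
  | 0, k => if k = 0 then 1 else 0
  | n + 1, k =>
      if k = 0 then 0
      else k * stirlingSecond n k + stirlingSecond n (k - 1)

lemma stirlingSecond_succ (n k : ℕ) (hk : k ≠ 0) :
    stirlingSecond (n + 1) k = k * stirlingSecond n k + stirlingSecond n (k - 1) := by
  simp [stirlingSecond, hk]

lemma stirlingSecond_eq_zero : ∀ n k, n < k → stirlingSecond n k = 0 := by
  intro n
  induction n with
  | zero => intro k h; simp [stirlingSecond]; omega
  | succ n ih =>
    intro k h
    rw [stirlingSecond_succ n k (by omega), ih k (by omega), ih (k - 1) (by omega)]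
    ring

lemma stirlingSecond_pos : ∀ n k, 1 ≤ k → k ≤ n → 0 < stirlingSecond n k := by
  intro n
  induction n with
  | zero => intro k h1 h2; omega
  | succ n ih =>
    intro k h1 h2
    rw [stirlingSecond_succ n k (by omega)]
    rcases Nat.lt_or_ge n k with h | h
    · have hk : k = n + 1 := by omega
      subst hk
      rcases Nat.eq_zero_or_pos n with h0 | h0
      · subst h0; simp [stirlingSecond]
      · have := ih n h0 le_rfl
        simp only [Nat.add_sub_cancel]
        omega
    · have := ih k h1 h
      have := Nat.mul_pos (show 0 < k by omega) this
      omega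

/-- For Stirling numbers of the second kind, `k T(n,k)² ≥ (k+1) T(n,k+1) T(n,k-1)`. -/
theorem stirlingSecond_gamma_log_concave (n k : ℕ) (hn : 1 ≤ n) (hk1 : 1 ≤ k)
    (hkn : k ≤ n) :
    (k + 1) * stirlingSecond n (k + 1) * stirlingSecond n (k - 1) ≤
      k * stirlingSecond n k ^ 2 := by
  induction n generalizing k with
  | zero => omega
  | succ n ih =>
    rcases Nat.eq_or_lt_of_le hk1 with hk | hk
    · -- k = 1
      rcases hk.symm with rfl
      have h0 : stirlingSecond (n + 1) 0 = 0 := by simp [stirlingSecond]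
      simp [h0]
    rcases Nat.eq_or_lt_of_le hkn with hkn' | hkn'
    · -- k = n + 1
      have : stirlingSecond (n+1) (k+1) = 0 := stirlingSecond_eq_zero _ _ (by omega)
      rw [this]; simp
    · -- 2 ≤ k ≤ n
      obtain ⟨j, rfl⟩ : ∃ j, k = j + 2 := ⟨k - 2, by omega⟩
      have hn1 : 1 ≤ n := by omega
      have hjn : j + 2 ≤ n := by omega
      set a := stirlingSecond n (j + 3) with ha
      set b := stirlingSecond n (j + 2) with hb
      set c := stirlingSecond n (j + 1) with hc
      set d := stirlingSecond n j with hd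
      have H1 : (j + 3) * a * c ≤ (j + 2) * b ^ 2 := by
        have := ih (j + 2) hn1 (by omega) hjn
        simpa using this
      have H2 : (j + 2) * b * d ≤ (j + 1) * c ^ 2 := by
        have := ih (j + 1) hn1 (by omega) (by omega)
        simpa using this
      have hbpos : 0 < b := stirlingSecond_pos n (j + 2) (by omega) hjn
      have hcpos : 0 < c := stirlingSecond_pos n (j + 1) (by omega) (by omega)
      have H3 : (j + 3) * a * d ≤ (j + 1) * b * c := by
        have hmul : ((j + 3) * a * d) * ((j + 2) * b * c) ≤
            ((j + 1) * b * c) * ((j + 2) * b * c) := by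
          calc ((j + 3) * a * d) * ((j + 2) * b * c)
              = ((j + 3) * a * c) * ((j + 2) * b * d) := by ring
            _ ≤ ((j + 2) * b ^ 2) * ((j + 1) * c ^ 2) := Nat.mul_le_mul H1 H2
            _ = ((j + 1) * b * c) * ((j + 2) * b * c) := by ring
        exact Nat.le_of_mul_le_mul_right hmul (by positivity)
      have H4 : (j + 3) * b * d ≤ (j + 2) * c ^ 2 := by
        have hmul : ((j + 3) * b * d) * (j + 2) ≤ ((j + 2) * c ^ 2) * (j + 2) := by
          calc ((j + 3) * b * d) * (j + 2) = ((j + 2) * b * d) * (j + 3) := by ring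
            _ ≤ ((j + 1) * c ^ 2) * (j + 3) := Nat.mul_le_mul_right _ H2
            _ ≤ ((j + 2) * c ^ 2) * (j + 2) := by nlinarith
        exact Nat.le_of_mul_le_mul_right hmul (by omega)
      simp only [show j + 2 + 1 = j + 3 from rfl, show j + 2 - 1 = j + 1 from rfl,
        show j + 3 - 1 = j + 2 from rfl, show j + 1 - 1 = j from rfl]
      rw [stirlingSecond_succ n (j + 3) (by omega), stirlingSecond_succ n (j + 2) (by omega),
        stirlingSecond_succ n (j + 1) (by omega)]
      simp only [Nat.add_sub_cancel, show j + 3 - 1 = j + 2 from rfl,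
        show j + 2 - 1 = j + 1 from rfl, show j + 1 - 1 = j from rfl]
      rw [← ha, ← hb, ← hc, ← hd]
      nlinarith [Nat.mul_le_mul_left ((j + 3) * (j + 1)) H1,
        Nat.mul_le_mul_left (j + 3) H3, H4,
        Nat.mul_le_mul H1 H2, sq_nonneg b, sq_nonneg c]
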